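/- Let P be a path from u to v in a graph G. If the graph obtained from G by deleting all edges of P and adding a new edge uv is Z3-connected, then G is Z3-connected. -/

import Mathlib

open scoped Classical

/-- A finite loopless multigraph: finite vertex and edge types, each edge has an
unordered pair of distinct endpoints (parallel edges allowed, loops forbidden). -/
structure Multigraph where
  V : Type
  E : Type
  fintypeV : Fintype V
  fintypeE : Fintype E
  ends : E → Sym2 V
  loopless : ∀ e, ¬ (ends e).IsDiag

attribute [instance] Multigraph.fintypeV Multigraph.fintypeE

namespace Multigraph

/-- `D` is an orientation of `G`: each edge is assigned an ordered pair (tail, head)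
compatible with its endpoints. -/
def IsOrientation (G : Multigraph) (D : G.E → G.V × G.V) : Prop :=
  ∀ e, G.ends e = s((D e).1, (D e).2)

/-- Out-degree of `v` under the orientation `D` (tail = first component). -/
noncomputable def outDeg (G : Multigraph) (D : G.E → G.V × G.V) (v : G.V) : ℕ :=
  {e : G.E | (D e).1 = v}.ncard

/-- In-degree of `v` under the orientation `D` (head = second component). -/
noncomputable def inDeg (G : Multigraph) (D : G.E → G.V × G.V) (v : G.V) : ℕ :=
  {e : G.E | (D e).2 = v}.ncard

/-- Flow conservation: at every vertex the sum of `f` over outgoing arcs equals the sum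
over incoming arcs. -/
def IsConserving (G : Multigraph) (D : G.E → G.V × G.V) (f : G.E → ℤ) : Prop :=
  ∀ v : G.V,
    (∑ e : G.E, if (D e).1 = v then f e else 0) =
      ∑ e : G.E, if (D e).2 = v then f e else 0

/-- `G` has a nowhere-zero 3-flow. -/
def HasNZ3Flow (G : Multigraph) : Prop :=
  ∃ (D : G.E → G.V × G.V) (f : G.E → ℤ),
    G.IsOrientation D ∧ (∀ e, 1 ≤ |f e| ∧ |f e| ≤ 2) ∧ G.IsConserving D f

/-- `G` is `Z3`-connected: every `Z3`-boundary is realized by some orientation. -/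
def Z3Connected (G : Multigraph) : Prop :=
  ∀ β : G.V → ZMod 3, (∑ v : G.V, β v) = 0 →
    ∃ D : G.E → G.V × G.V, G.IsOrientation D ∧
      ∀ v : G.V, ((G.outDeg D v : ZMod 3) - (G.inDeg D v : ZMod 3)) = β v

/-- Degree of a vertex: number of edges incident with it. -/
noncomputable def degree (G : Multigraph) (v : G.V) : ℕ :=
  {e : G.E | v ∈ G.ends e}.ncard

/-- `(S, F)` is a triangle-tree subgraph of `G`: start from a triangle and repeatedly
add a new vertex joined to the two endpoints of an existing edge. -/
inductive IsTriangleTree (G : Multigraph) : Set G.V → Set G.E → Prop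
  | base (x y z : G.V) (e1 e2 e3 : G.E)
      (hxy : x ≠ y) (hxz : x ≠ z) (hyz : y ≠ z)
      (h1 : G.ends e1 = s(x, y)) (h2 : G.ends e2 = s(y, z)) (h3 : G.ends e3 = s(x, z)) :
      IsTriangleTree G {x, y, z} {e1, e2, e3}
  | grow (S : Set G.V) (F : Set G.E) (hT : IsTriangleTree G S F)
      (v a b : G.V) (hv : v ∉ S) (e : G.E) (he : e ∈ F) (hab : G.ends e = s(a, b))
      (e1 e2 : G.E) (h1 : G.ends e1 = s(v, a)) (h2 : G.ends e2 = s(v, b)) :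
      IsTriangleTree G (insert v S) (insert e1 (insert e2 F))

/-- `G` contains a spanning triangle-tree. -/
def HasSpanningTriangleTree (G : Multigraph) : Prop :=
  ∃ F : Set G.E, G.IsTriangleTree Set.univ F

/-- Degree of `v` inside the edge set `F`. -/
noncomputable def degIn (G : Multigraph) (F : Set G.E) (v : G.V) : ℕ :=
  {e : G.E | e ∈ F ∧ v ∈ G.ends e}.ncard

/-- `(S, F)` is a triangle-path subgraph: a triangle-tree which is either a single
triangle or has exactly two leaves (vertices of degree 2). -/
def IsTrianglePath (G : Multigraph) (S : Set G.V) (F : Set G.E) : Prop :=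
  G.IsTriangleTree S F ∧ (S.ncard = 3 ∨ {v ∈ S | G.degIn F v = 2}.ncard = 2)

/-- `(S, F)` is a subgraph of `G`: endpoints of every chosen edge are chosen vertices. -/
def Subgraph (G : Multigraph) (S : Set G.V) (F : Set G.E) : Prop :=
  ∀ e ∈ F, ∀ v, v ∈ G.ends e → v ∈ S

/-- `G` is isomorphic to the complete (simple) graph on `n` vertices. -/
def IsCompleteGraphOn (G : Multigraph) (n : ℕ) : Prop :=
  ∃ (φ : G.V ≃ Fin n) (ψ : G.E ≃ {p : Sym2 (Fin n) // ¬ p.IsDiag}),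
    ∀ e, Sym2.map (⇑φ) (G.ends e) = (ψ e).1

def IsK3 (G : Multigraph) : Prop := G.IsCompleteGraphOn 3

def IsK4 (G : Multigraph) : Prop := G.IsCompleteGraphOn 4

/-- `G` is a bull-growing of `H` (equivalently, `H` is the bull-reduction of `G`):
`u, v` are adjacent vertices of degree 3 in `G` with common neighbour `w`, the remaining
neighbours of `u`, `v` are `a`, `b`, and `H = G - u - v + ab` (with a loop deleted when
`a = b`). -/
def IsBullGrowing (G H : Multigraph) : Prop :=
  ∃ (u v w a b : G.V) (euv euw evw eua evb : G.E),
    G.ends euv = s(u, v) ∧ G.ends euw = s(u, w) ∧ G.ends evw = s(v, w) ∧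
    G.ends eua = s(u, a) ∧ G.ends evb = s(v, b) ∧
    a ≠ v ∧ b ≠ u ∧
    euv ≠ euw ∧ euv ≠ eua ∧ euw ≠ eua ∧
    euv ≠ evw ∧ euv ≠ evb ∧ evw ≠ evb ∧
    {e : G.E | u ∈ G.ends e} = {euv, euw, eua} ∧
    {e : G.E | v ∈ G.ends e} = {euv, evw, evb} ∧
    ∃ φ : H.V → G.V, Function.Injective φ ∧
      Set.range φ = {x : G.V | x ≠ u ∧ x ≠ v} ∧
      ((a = b → ∃ ψ : H.E → G.E, Function.Injective ψ ∧
          Set.range ψ = {e : G.E | e ∉ ({euv, euw, evw, eua, evb} : Set G.E)} ∧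
          ∀ e, G.ends (ψ e) = Sym2.map φ (H.ends e)) ∧
       (a ≠ b → ∃ (e0 : H.E) (ψ : H.E → G.E),
          Sym2.map φ (H.ends e0) = s(a, b) ∧
          Set.InjOn ψ {e : H.E | e ≠ e0} ∧
          ψ '' {e : H.E | e ≠ e0} = {e : G.E | e ∉ ({euv, euw, evw, eua, evb} : Set G.E)} ∧
          ∀ e, e ≠ e0 → G.ends (ψ e) = Sym2.map φ (H.ends e)))

/-- `(S, F)` is a triangle (a `K3` subgraph) of `G`. -/
def IsTriangleSub (G : Multigraph) (S : Set G.V) (F : Set G.E) : Prop :=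
  ∃ (x y z : G.V) (e1 e2 e3 : G.E),
    x ≠ y ∧ x ≠ z ∧ y ≠ z ∧
    G.ends e1 = s(x, y) ∧ G.ends e2 = s(y, z) ∧ G.ends e3 = s(x, z) ∧
    S = {x, y, z} ∧ F = {e1, e2, e3}

/-- The subgraph `(S, F)` of `G` is `Z3`-connected (as a graph in its own right). -/
def SubZ3Connected (G : Multigraph) (S : Set G.V) (F : Set G.E) : Prop :=
  ∀ β : G.V → ZMod 3, (∀ v, v ∉ S → β v = 0) → (∑ v : G.V, β v) = 0 →
    ∃ D : G.E → G.V × G.V, G.IsOrientation D ∧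
      ∀ v ∈ S, (({e : G.E | e ∈ F ∧ (D e).1 = v}.ncard : ZMod 3)
        - ({e : G.E | e ∈ F ∧ (D e).2 = v}.ncard : ZMod 3)) = β v

/-- `G` is the 2-sum of its subgraphs `(SA, FA)` and `(SB, FB)`:
`E(G) = E(A) ∪ E(B)`, `|E(A) ∩ E(B)| = 1` and `|V(A) ∩ V(B)| = 2`. -/
def IsTwoSum (G : Multigraph) (SA : Set G.V) (FA : Set G.E)
    (SB : Set G.V) (FB : Set G.E) : Prop :=
  G.Subgraph SA FA ∧ G.Subgraph SB FB ∧
  FA ∪ FB = Set.univ ∧ (FA ∩ FB).ncard = 1 ∧ (SA ∩ SB).ncard = 2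

/-- All vertices of `G` are joined by walks using only edges from `F`. -/
def ConnOn (G : Multigraph) (F : Set G.E) : Prop :=
  ∀ u v : G.V, Relation.ReflTransGen (fun x y => ∃ e ∈ F, G.ends e = s(x, y)) u v

/-- The spanning subgraph with edge set `F` is 2-edge-connected:
connected and with no cut edge. -/
def TwoEdgeConnOn (G : Multigraph) (F : Set G.E) : Prop :=
  G.ConnOn F ∧ ∀ e ∈ F, G.ConnOn (F \ {e})

/-- The orientation `D` is strongly connected. -/
def StronglyConnected (G : Multigraph) (D : G.E → G.V × G.V) : Prop :=
  ∀ u v : G.V, Relation.ReflTransGen (fun x y => ∃ e : G.E, D e = (x, y)) u v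

/-- `G` belongs to the class `S3`: every `Z3`-boundary is realized by a strongly
connected orientation. -/
def InS3 (G : Multigraph) : Prop :=
  ∀ β : G.V → ZMod 3, (∑ v : G.V, β v) = 0 →
    ∃ D : G.E → G.V × G.V, G.IsOrientation D ∧ G.StronglyConnected D ∧
      ∀ v : G.V, ((G.outDeg D v : ZMod 3) - (G.inDeg D v : ZMod 3)) = β v

/-- `G` has a cycle (of length ≥ 2, so possibly a pair of parallel edges) all of whose
edges lie in `A`. -/
def HasCycleIn (G : Multigraph) (A : Set G.E) : Prop :=
  ∃ (vs : List G.V) (es : List G.E),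
    2 ≤ vs.length ∧ vs.Nodup ∧ es.Nodup ∧ es.length = vs.length ∧
    (∀ e ∈ es, e ∈ A) ∧
    ∀ (i : ℕ) (h1 : i < es.length) (h2 : i < vs.length)
      (h3 : (i + 1) % vs.length < vs.length),
      G.ends (es.get ⟨i, h1⟩) = s(vs.get ⟨i, h2⟩, vs.get ⟨(i + 1) % vs.length, h3⟩)

/-- `(vs, es)` is a path from `u` to `v` in `G`. -/
def IsPath (G : Multigraph) (u v : G.V) (vs : List G.V) (es : List G.E) : Prop :=
  vs.Nodup ∧ es.Nodup ∧ vs.head? = some u ∧ vs.getLast? = some v ∧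
  vs.length = es.length + 1 ∧
  ∀ (i : ℕ) (h1 : i < es.length) (h2 : i < vs.length) (h3 : i + 1 < vs.length),
    G.ends (es.get ⟨i, h1⟩) = s(vs.get ⟨i, h2⟩, vs.get ⟨i + 1, h3⟩)

/-- `H` is isomorphic to the subgraph `(S, F)` of `G`. -/
def IsIsoToSub (H G : Multigraph) (S : Set G.V) (F : Set G.E) : Prop :=
  ∃ (φ : H.V → G.V) (ψ : H.E → G.E),
    Function.Injective φ ∧ Set.range φ = S ∧
    Function.Injective ψ ∧ Set.range ψ = F ∧
    ∀ e, G.ends (ψ e) = Sym2.map φ (H.ends e)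

/-- `G'` is (isomorphic to) the graph obtained from `G` by adding two new edges with
endpoint pairs `p` and `q`. -/
def IsAddTwoEdges (G : Multigraph) (p q : Sym2 G.V) (G' : Multigraph) : Prop :=
  ∃ (φ : G.V ≃ G'.V) (e1 e2 : G'.E), e1 ≠ e2 ∧
    G'.ends e1 = Sym2.map (⇑φ) p ∧ G'.ends e2 = Sym2.map (⇑φ) q ∧
    ∃ ψ : G.E → G'.E, Function.Injective ψ ∧
      Set.range ψ = {e : G'.E | e ≠ e1 ∧ e ≠ e2} ∧
      ∀ e, G'.ends (ψ e) = Sym2.map (⇑φ) (G.ends e)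

/-- `G'` is (isomorphic to) the graph obtained from `G` by deleting the edges in `X`
and adding one new edge with endpoint pair `p`. -/
def IsDeleteAddEdge (G : Multigraph) (X : Set G.E) (p : Sym2 G.V) (G' : Multigraph) : Prop :=
  ∃ (φ : G.V ≃ G'.V) (e0 : G'.E),
    G'.ends e0 = Sym2.map (⇑φ) p ∧
    ∃ ψ : {e : G.E // e ∉ X} → G'.E, Function.Injective ψ ∧
      Set.range ψ = {e : G'.E | e ≠ e0} ∧
      ∀ e : {e : G.E // e ∉ X}, G'.ends (ψ e) = Sym2.map (⇑φ) (G.ends e.1)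

/-- `G` is a crystal: a spanning triangle-path plus one extra edge joining its two
leaves. -/
def IsCrystal (G : Multigraph) : Prop :=
  ∃ (F : Set G.E) (u v : G.V) (e0 : G.E),
    G.IsTrianglePath Set.univ F ∧ u ≠ v ∧
    G.degIn F u = 2 ∧ G.degIn F v = 2 ∧
    e0 ∉ F ∧ G.ends e0 = s(u, v) ∧ insert e0 F = Set.univ

/-- The subgraph with edge set `F` is triangularly connected: any two of its edges lie
on a common triangle-path inside it. -/
def TriangularlyConnectedOn (G : Multigraph) (F : Set G.E) : Prop :=
  ∀ e1 ∈ F, ∀ e2 ∈ F, ∃ (S : Set G.V) (F' : Set G.E),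
    F' ⊆ F ∧ G.IsTrianglePath S F' ∧ e1 ∈ F' ∧ e2 ∈ F'

/-- `G` is triangularly connected. -/
def TriangularlyConnected (G : Multigraph) : Prop :=
  G.TriangularlyConnectedOn Set.univ

/-- `G` contains a spanning triangularly-connected subgraph. -/
def HasSpanningTriangularlyConnected (G : Multigraph) : Prop :=
  ∃ F : Set G.E, G.TriangularlyConnectedOn F

/-- `G` admits a circular `t/s`-flow. -/
def HasCircularFlow (G : Multigraph) (t s : ℤ) : Prop :=
  ∃ (D : G.E → G.V × G.V) (f : G.E → ℤ),
    G.IsOrientation D ∧ (∀ e, s ≤ |f e| ∧ |f e| ≤ t - s) ∧ G.IsConserving D f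

end Multigraph

/-- `G` can be obtained from `K4` by a (possibly empty) series of bull-growing
operations. -/
inductive FromK4ByBull : Multigraph → Prop
  | base (G : Multigraph) : G.IsK4 → FromK4ByBull G
  | grow (G H : Multigraph) : FromK4ByBull H → G.IsBullGrowing H → FromK4ByBull G

private lemma degDiff_eq_sum (H : Multigraph) (D : H.E → H.V × H.V) (x : H.V) :
    ((H.outDeg D x : ZMod 3) - (H.inDeg D x : ZMod 3)) =
      ∑ e : H.E, ((if (D e).1 = x then (1 : ZMod 3) else 0)
        - (if (D e).2 = x then (1 : ZMod 3) else 0)) := by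
  rw [Finset.sum_sub_distrib, Multigraph.outDeg, Multigraph.inDeg,
    Set.ncard_eq_toFinset_card', Set.ncard_eq_toFinset_card',
    Set.toFinset_setOf, Set.toFinset_setOf, Finset.card_filter, Finset.card_filter]
  push_cast
  rfl

/-- Let `P` be a path from `u` to `v` in `G`. If `G − E(P) + uv` is
`Z3`-connected, then so is `G`. -/
theorem stmt_6 (G G' : Multigraph) (u v : G.V) (vs : List G.V) (es : List G.E)
    (huv : u ≠ v) (hP : G.IsPath u v vs es)
    (hmod : G.IsDeleteAddEdge {e : G.E | e ∈ es} s(u, v) G')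
    (hZ3 : G'.Z3Connected) :
    G.Z3Connected := by
  classical
  obtain ⟨hvnd, hend, hhead, hlast, hlen, hends⟩ := hP
  obtain ⟨φ, e0, he0, ψ, hψinj, hψrange, hψends⟩ := hmod
  intro β hβ
  have hsum' : (∑ y : G'.V, β (φ.symm y)) = 0 := (Equiv.sum_comp φ.symm β).trans hβ
  obtain ⟨D', hD'or, hD'β⟩ := hZ3 (fun y => β (φ.symm y)) hsum'
  have he0' : G'.ends e0 = s(φ u, φ v) := by rw [he0, Sym2.map_pair_eq]
  have horient : D' e0 = (φ u, φ v) ∨ D' e0 = (φ v, φ u) := by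
    have h := (hD'or e0).symm.trans he0'
    rw [Sym2.eq_iff] at h
    rcases h with ⟨h1, h2⟩ | ⟨h1, h2⟩
    · exact Or.inl (Prod.ext h1 h2)
    · exact Or.inr (Prod.ext h1 h2)
  set D : G.E → G.V × G.V := fun e =>
    if h : e ∈ es then
      (if D' e0 = (φ u, φ v) then
        (vs.get ⟨es.idxOf e, by rw [hlen]; exact Nat.lt_succ_of_lt (List.idxOf_lt_length_iff.2 h)⟩,
         vs.get ⟨es.idxOf e + 1, by rw [hlen]; exact Nat.succ_lt_succ (List.idxOf_lt_length_iff.2 h)⟩)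
      else
        (vs.get ⟨es.idxOf e + 1, by rw [hlen]; exact Nat.succ_lt_succ (List.idxOf_lt_length_iff.2 h)⟩,
         vs.get ⟨es.idxOf e, by rw [hlen]; exact Nat.lt_succ_of_lt (List.idxOf_lt_length_iff.2 h)⟩))
    else
      (φ.symm (D' (ψ ⟨e, h⟩)).1, φ.symm (D' (ψ ⟨e, h⟩)).2) with hDdef
  have hDor : G.IsOrientation D := by
    intro e
    by_cases h : e ∈ es
    · have hi : es.idxOf e < es.length := List.idxOf_lt_length_iff.2 h
      have h2 := hends (es.idxOf e) hi
        (by rw [hlen]; exact Nat.lt_succ_of_lt hi) (by rw [hlen]; exact Nat.succ_lt_succ hi)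
      rw [List.idxOf_get] at h2
      simp only [hDdef, dif_pos h]
      split_ifs with hf
      · exact h2
      · rw [h2]; exact Sym2.eq_swap
    · simp only [hDdef, dif_neg h]
      have h1 := hψends ⟨e, h⟩
      have h2 := hD'or (ψ ⟨e, h⟩)
      rw [h1] at h2
      have := congrArg (Sym2.map φ.symm) h2
      simpa [Sym2.map_map, Function.comp, Sym2.map_pair_eq] using this
  refine ⟨D, hDor, fun x => ?_⟩
  rw [degDiff_eq_sum]
  set g' : G'.E → ZMod 3 := fun e' =>
    (if (D' e').1 = φ x then (1 : ZMod 3) else 0) - (if (D' e').2 = φ x then 1 else 0) with hg'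
  have hG' : ∑ e' : G'.E, g' e' = β x := by
    have h := hD'β (φ x)
    rw [degDiff_eq_sum] at h
    simpa [hg'] using h
  set F : ℕ → ZMod 3 := fun i =>
    if h : i < vs.length then (if vs.get ⟨i, h⟩ = x then 1 else 0) else 0 with hF
  have hne : vs ≠ [] := by
    intro hnil; rw [hnil] at hlen; simp at hlen
  have hF0 : F 0 = (if u = x then 1 else 0) := by
    have h0 : (0 : ℕ) < vs.length := List.length_pos_iff.2 hne
    have hu : vs.get ⟨0, h0⟩ = u := by
      have := List.head?_eq_head hne
      rw [hhead] at this
      simpa [List.get_eq_getElem, List.getElem_zero h0] using (Option.some_inj.1 this).symm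
    simp only [hF, dif_pos h0, hu]
  have hFn : F es.length = (if v = x then 1 else 0) := by
    have hn : es.length < vs.length := by rw [hlen]; omega
    have hv : vs.get ⟨es.length, hn⟩ = v := by
      have h1 := List.getLast?_eq_getLast_of_ne_nil hne
      rw [hlast] at h1
      have h2 := List.getLast_eq_getElem hne
      have h3 : vs.length - 1 = es.length := by omega
      have := (Option.some_inj.1 h1).symm
      rw [h2] at this
      simp only [List.get_eq_getElem]
      rw [← this]
      congr 1
      omega
    simp only [hF, dif_pos hn, hv]
  set g : G.E → ZMod 3 := fun e =>
    (if (D e).1 = x then (1 : ZMod 3) else 0) - (if (D e).2 = x then 1 else 0) with hg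
  have hsplit : ∑ e : G.E, g e
      = (∑ e ∈ Finset.univ.filter (fun e => e ∈ es), g e)
        + ∑ e ∈ Finset.univ.filter (fun e => ¬ e ∈ es), g e :=
    (Finset.sum_filter_add_sum_filter_not _ _ _).symm
  have hpath : (∑ e ∈ Finset.univ.filter (fun e => e ∈ es), g e)
      = ∑ i ∈ Finset.range es.length,
          (if D' e0 = (φ u, φ v) then F i - F (i + 1) else F (i + 1) - F i) := by
    refine Finset.sum_bij (fun e _ => es.idxOf e) ?_ ?_ ?_ ?_
    · intro a ha
      rw [Finset.mem_filter] at ha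
      exact Finset.mem_range.2 (List.idxOf_lt_length_iff.2 ha.2)
    · intro a1 h1 a2 h2 h
      rw [Finset.mem_filter] at h1 h2
      have e1 := List.getElem_idxOf (List.idxOf_lt_length_iff.2 h1.2)
      have e2 := List.getElem_idxOf (List.idxOf_lt_length_iff.2 h2.2)
      rw [← e1, ← e2]
      congr 1
    · intro b hb
      rw [Finset.mem_range] at hb
      refine ⟨es[b], ?_, List.Nodup.idxOf_getElem hend b hb⟩
      rw [Finset.mem_filter]
      exact ⟨Finset.mem_univ _, List.getElem_mem _⟩
    · intro a ha
      rw [Finset.mem_filter] at ha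
      have h := ha.2
      have hi : es.idxOf a < es.length := List.idxOf_lt_length_iff.2 h
      have hlt1 : es.idxOf a < vs.length := by rw [hlen]; omega
      have hlt2 : es.idxOf a + 1 < vs.length := by rw [hlen]; omega
      simp only [hg, hDdef, dif_pos h, hF, dif_pos hlt1, dif_pos hlt2]
      split_ifs with hf <;> rfl
  have hnon : (∑ e ∈ Finset.univ.filter (fun e => ¬ e ∈ es), g e)
      = ∑ e' ∈ Finset.univ.filter (fun e' => e' ≠ e0), g' e' := by
    have hto : ∀ e ∈ Finset.univ.filter (fun e => ¬ e ∈ es), e ∉ ({e | e ∈ es} : Set G.E) := by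
      intro e he; rw [Finset.mem_filter] at he; exact he.2
    refine Finset.sum_bij (fun e he => ψ ⟨e, hto e he⟩) ?_ ?_ ?_ ?_
    · intro a ha
      rw [Finset.mem_filter]
      refine ⟨Finset.mem_univ _, ?_⟩
      have hm : ψ ⟨a, hto a ha⟩ ∈ Set.range ψ := Set.mem_range_self _
      rw [hψrange] at hm
      exact hm
    · intro a1 h1 a2 h2 h
      have := hψinj h
      exact congrArg Subtype.val this
    · intro b hb
      rw [Finset.mem_filter] at hb
      have : b ∈ Set.range ψ := by rw [hψrange]; exact hb.2
      obtain ⟨w, hw⟩ := this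
      refine ⟨w.1, ?_, by rw [← hw]⟩
      rw [Finset.mem_filter]
      exact ⟨Finset.mem_univ _, w.2⟩
    · intro a ha
      rw [Finset.mem_filter] at ha
      simp only [hg, hg', hDdef, dif_neg ha.2, Equiv.symm_apply_eq]
  have herase : g' e0 + ∑ e' ∈ Finset.univ.filter (fun e' => e' ≠ e0), g' e' = β x := by
    rw [Finset.filter_ne', Finset.add_sum_erase _ _ (Finset.mem_univ e0)]
    exact hG'
  rw [hsplit, hpath, hnon]
  rcases horient with hf | hf
  · have h1 : (∑ i ∈ Finset.range es.length,
        (if D' e0 = (φ u, φ v) then F i - F (i + 1) else F (i + 1) - F i))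
        = F 0 - F es.length := by
      rw [Finset.sum_congr rfl (fun i _ => if_pos hf), Finset.sum_range_sub' F]
    have h2 : g' e0 = F 0 - F es.length := by
      simp only [hg', hf, hF0, hFn]
      simp [φ.injective.eq_iff]
    rw [h1]
    have := herase
    rw [h2] at this
    linear_combination this
  · have hf' : ¬ (D' e0 = (φ u, φ v)) := by
      intro hc
      rw [hc] at hf
      have h1 : φ u = φ v := (Prod.mk.injEq _ _ _ _ ▸ hf).1
      exact huv (φ.injective h1)
    have h1 : (∑ i ∈ Finset.range es.length,
        (if D' e0 = (φ u, φ v) then F i - F (i + 1) else F (i + 1) - F i))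
        = F es.length - F 0 := by
      rw [Finset.sum_congr rfl (fun i _ => if_neg hf'), Finset.sum_range_sub F]
    have h2 : g' e0 = F es.length - F 0 := by
      simp only [hg', hf, hF0, hFn]
      simp [φ.injective.eq_iff]
    rw [h1]
    have := herase
    rw [h2] at this
    linear_combination this
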